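/- Let γ, γ_j be metric spaces, f : γ_j → γ an α-Hölder contraction with d(f(x), f(y)) ≤ λ_s d(x,y), and φ : γ_j → ℝ with sup φ − inf φ < ε and |e^φ|_α ≤ ε · inf e^φ. Let 0 < λ_s < 1, α ∈ (0,1], and suppose κ > ε / (1 − (λ_s^α e^ε + D^α ε)) where D is a uniform diameter bound and λ_s^α e^ε + D^α ε < 1. If ρ : γ → ℝ is positive with |ρ|_α ≤ κ inf ρ, then ρ_j := (1/p) · (ρ ∘ f) · e^φ (for any integer p ≥ 1) satisfies |ρ_j|_α ≤ λ κ · inf ρ_j for some λ < 1 depending only on λ_s, ε, α, D, κ. Concretely, |ρ_j|_α / inf ρ_j ≤ (λ_s^α e^ε + D^α ε) κ + ε. -/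
import Mathlib


/-- Invariance of the auxiliary Hölder cones under the transfer operator:
if `ρ` lies in the cone `D(γ,κ)` then `ρ_j = (1/p)·(ρ∘f)·e^φ` lies in the cone
`D(γ_j, λκ)` for some `λ < 1`; concretely
`|ρ_j|_α / inf ρ_j ≤ (λ_s^α e^ε + D^α ε) κ + ε`. -/
theorem aux_cone_invariance
    {γ γj : Type*} [MetricSpace γ] [Nonempty γ] [MetricSpace γj] [Nonempty γj]
    (D : ℝ) (hDγ : ∀ x y : γ, dist x y ≤ D) (hDγj : ∀ x y : γj, dist x y ≤ D)
    (α : ℝ) (hα0 : 0 < α) (hα1 : α ≤ 1)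
    (lam_s : ℝ) (hls0 : 0 < lam_s) (hls1 : lam_s < 1)
    (f : γj → γ) (hf : ∀ x y : γj, dist (f x) (f y) ≤ lam_s * dist x y)
    (ε : ℝ) (hε : 0 < ε)
    (φ : γj → ℝ)
    (hφosc : ∀ x y : γj, φ x - φ y < ε)
    (hφHolder : ∀ x y : γj,
      |Real.exp (φ x) - Real.exp (φ y)| ≤ ε * (⨅ z, Real.exp (φ z)) * dist x y ^ α)
    (hsmall : lam_s ^ α * Real.exp ε + D ^ α * ε < 1)
    (κ : ℝ) (hκ : ε / (1 - (lam_s ^ α * Real.exp ε + D ^ α * ε)) < κ)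
    (p : ℕ) (hp : 1 ≤ p)
    (ρ : γ → ℝ) (hρpos : ∀ x, 0 < ρ x)
    (hρHolder : ∀ x y : γ, |ρ x - ρ y| ≤ κ * (⨅ z, ρ z) * dist x y ^ α) :
    (∀ x y : γj,
      |(1 / p : ℝ) * ρ (f x) * Real.exp (φ x) - (1 / p : ℝ) * ρ (f y) * Real.exp (φ y)|
        ≤ ((lam_s ^ α * Real.exp ε + D ^ α * ε) * κ + ε) *
            (⨅ z : γj, (1 / p : ℝ) * ρ (f z) * Real.exp (φ z)) * dist x y ^ α) ∧
    (∃ lam : ℝ, lam < 1 ∧ ∀ x y : γj,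
      |(1 / p : ℝ) * ρ (f x) * Real.exp (φ x) - (1 / p : ℝ) * ρ (f y) * Real.exp (φ y)|
        ≤ lam * κ *
            (⨅ z : γj, (1 / p : ℝ) * ρ (f z) * Real.exp (φ z)) * dist x y ^ α) := by
  set C : ℝ := lam_s ^ α * Real.exp ε + D ^ α * ε with hC
  have hD0 : (0:ℝ) ≤ D := le_trans dist_nonneg (hDγ (Classical.arbitrary γ) (Classical.arbitrary γ))
  have hC0 : 0 < C := by
    have h1 : 0 < lam_s ^ α := Real.rpow_pos_of_pos hls0 α
    have h2 : 0 ≤ D ^ α := Real.rpow_nonneg hD0 α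
    positivity
  have h1C : 0 < 1 - C := by linarith
  have hκ0 : 0 < κ := lt_trans (div_pos hε h1C) hκ
  set mρ : ℝ := ⨅ z, ρ z with hmρ
  set me : ℝ := ⨅ z, Real.exp (φ z) with hme
  have hbρ : BddBelow (Set.range ρ) := ⟨0, by rintro _ ⟨z, rfl⟩; exact (hρpos z).le⟩
  have hbe : BddBelow (Set.range fun z => Real.exp (φ z)) :=
    ⟨0, by rintro _ ⟨z, rfl⟩; exact (Real.exp_pos _).le⟩
  have hmρ0 : 0 ≤ mρ := le_ciInf fun z => (hρpos z).le
  have hme0 : 0 ≤ me := le_ciInf fun z => (Real.exp_pos _).le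
  have hpR : (0:ℝ) < (p:ℝ) := by exact_mod_cast Nat.lt_of_lt_of_le Nat.zero_lt_one hp
  have hp0 : (0:ℝ) < 1 / p := by positivity
  -- infimum lower bound
  have hinf : (1 / p : ℝ) * mρ * me ≤ ⨅ z : γj, (1 / p : ℝ) * ρ (f z) * Real.exp (φ z) := by
    apply le_ciInf
    intro z
    have h1 : mρ ≤ ρ (f z) := ciInf_le hbρ (f z)
    have h2 : me ≤ Real.exp (φ z) := ciInf_le hbe z
    exact mul_le_mul (mul_le_mul_of_nonneg_left h1 hp0.le) h2 hme0
      (mul_nonneg hp0.le (hρpos _).le)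
  -- key estimate
  have key : ∀ x y : γj,
      |ρ (f x) * Real.exp (φ x) - ρ (f y) * Real.exp (φ y)|
        ≤ (C * κ + ε) * (mρ * me) * dist x y ^ α := by
    intro x y
    have hd0 : (0:ℝ) ≤ dist x y := dist_nonneg
    have hdα : (0:ℝ) ≤ dist x y ^ α := Real.rpow_nonneg hd0 α
    have h1 : |ρ (f x) - ρ (f y)| ≤ κ * mρ * (lam_s ^ α * dist x y ^ α) := by
      refine (hρHolder (f x) (f y)).trans ?_
      have : dist (f x) (f y) ^ α ≤ (lam_s * dist x y) ^ α :=
        Real.rpow_le_rpow dist_nonneg (hf x y) hα0.le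
      rw [Real.mul_rpow hls0.le hd0] at this
      exact mul_le_mul_of_nonneg_left this (by positivity)
    have h2 : Real.exp (φ x) ≤ Real.exp ε * me := by
      have : Real.exp (φ x) / Real.exp ε ≤ me := by
        apply le_ciInf
        intro z
        rw [div_le_iff₀ (Real.exp_pos _), ← Real.exp_add]
        exact Real.exp_le_exp.2 (by linarith [hφosc x z])
      calc Real.exp (φ x) = Real.exp ε * (Real.exp (φ x) / Real.exp ε) := by
            field_simp
        _ ≤ Real.exp ε * me := mul_le_mul_of_nonneg_left this (Real.exp_pos _).le
    have h3 : ρ (f y) ≤ mρ + κ * mρ * D ^ α := by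
      have : ρ (f y) - κ * mρ * D ^ α ≤ mρ := by
        apply le_ciInf
        intro z
        have h := hρHolder (f y) z
        have hdd : dist (f y) z ^ α ≤ D ^ α :=
          Real.rpow_le_rpow dist_nonneg (hDγ _ _) hα0.le
        have := h.trans (mul_le_mul_of_nonneg_left hdd (by positivity))
        have h' := abs_le.1 this
        linarith [h'.1]
      linarith
    have h4 : |Real.exp (φ x) - Real.exp (φ y)| ≤ ε * me * dist x y ^ α := hφHolder x y
    have hex0 : 0 < Real.exp (φ x) := Real.exp_pos _
    have hρy0 : 0 < ρ (f y) := hρpos _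
    calc |ρ (f x) * Real.exp (φ x) - ρ (f y) * Real.exp (φ y)|
        = |(ρ (f x) - ρ (f y)) * Real.exp (φ x)
            + ρ (f y) * (Real.exp (φ x) - Real.exp (φ y))| := by ring_nf
      _ ≤ |(ρ (f x) - ρ (f y)) * Real.exp (φ x)|
            + |ρ (f y) * (Real.exp (φ x) - Real.exp (φ y))| := abs_add_le _ _
      _ = |ρ (f x) - ρ (f y)| * Real.exp (φ x)
            + ρ (f y) * |Real.exp (φ x) - Real.exp (φ y)| := by
            rw [abs_mul, abs_mul, abs_of_pos hex0, abs_of_pos hρy0]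
      _ ≤ (κ * mρ * (lam_s ^ α * dist x y ^ α)) * (Real.exp ε * me)
            + (mρ + κ * mρ * D ^ α) * (ε * me * dist x y ^ α) := by
            gcongr
      _ = (C * κ + ε) * (mρ * me) * dist x y ^ α := by rw [hC]; ring
  have main : ∀ x y : γj,
      |(1 / p : ℝ) * ρ (f x) * Real.exp (φ x) - (1 / p : ℝ) * ρ (f y) * Real.exp (φ y)|
        ≤ (C * κ + ε) * (⨅ z : γj, (1 / p : ℝ) * ρ (f z) * Real.exp (φ z)) * dist x y ^ α := by
    intro x y
    have hd0 : (0:ℝ) ≤ dist x y := dist_nonneg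
    have hdα : (0:ℝ) ≤ dist x y ^ α := Real.rpow_nonneg hd0 α
    have hCκε : 0 ≤ C * κ + ε := by positivity
    have h := key x y
    have heq : (1 / p : ℝ) * ρ (f x) * Real.exp (φ x) - (1 / p : ℝ) * ρ (f y) * Real.exp (φ y)
        = (1 / p : ℝ) * (ρ (f x) * Real.exp (φ x) - ρ (f y) * Real.exp (φ y)) := by ring
    rw [heq, abs_mul, abs_of_pos hp0]
    calc (1 / p : ℝ) * |ρ (f x) * Real.exp (φ x) - ρ (f y) * Real.exp (φ y)|
        ≤ (1 / p : ℝ) * ((C * κ + ε) * (mρ * me) * dist x y ^ α) :=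
          mul_le_mul_of_nonneg_left h hp0.le
      _ = (C * κ + ε) * ((1 / p : ℝ) * mρ * me) * dist x y ^ α := by ring
      _ ≤ (C * κ + ε) * (⨅ z : γj, (1 / p : ℝ) * ρ (f z) * Real.exp (φ z)) * dist x y ^ α := by
          gcongr
  refine ⟨main, ⟨C + ε / κ, ?_, ?_⟩⟩
  · rw [div_lt_iff₀ h1C] at hκ
    have : ε / κ < 1 - C := (div_lt_iff₀ hκ0).2 (by linarith [hκ])
    linarith
  · intro x y
    have : (C + ε / κ) * κ = C * κ + ε := by field_simp
    rw [this]
    exact main x y
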